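/- arXiv:1106.3408 — 4 statements merged into one kernel-verified Lean document; each statement's English description precedes it below -/
import Mathlib

section
/- Every Bessel sequence of unit vectors in a Hilbert space can be partitioned into finitely many separated Bessel sequences, i.e., there exists a finite partition of the index set such that on each part the subsequence is separated (with some constant γ < 1). -/
noncomputable def greedyCol (N : ℕ) (hN : 0 < N) (adj : ℕ → Finset ℕ) : ℕ → Fin N
  | n =>
    let forb : Finset (Fin N) :=
      ((adj n).filter (· < n)).attach.image (fun m => greedyCol N hN adj m.1)
    if h : (Finset.univ \ forb).Nonempty then h.choose else ⟨0, hN⟩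
  decreasing_by
    have := m.2; simp only [Finset.mem_filter] at this; exact this.2

lemma greedyCol_spec (N : ℕ) (hN : 0 < N) (adj : ℕ → Finset ℕ)
    (n : ℕ) (hcard : ((adj n).filter (· < n)).card < N)
    (m : ℕ) (hm : m ∈ adj n) (hmn : m < n) :
    greedyCol N hN adj m ≠ greedyCol N hN adj n := by
  conv_rhs => rw [greedyCol]
  set forb : Finset (Fin N) :=
    ((adj n).filter (· < n)).attach.image (fun m => greedyCol N hN adj m.1) with hforb
  have hne : (Finset.univ \ forb).Nonempty := by
    rw [Finset.sdiff_nonempty]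
    intro hsub
    have h1 : (Finset.univ : Finset (Fin N)).card ≤ forb.card := Finset.card_le_card hsub
    have h2 : forb.card ≤ ((adj n).filter (· < n)).card := by
      refine (Finset.card_image_le).trans ?_
      simp
    simp only [Finset.card_univ, Fintype.card_fin] at h1
    omega
  rw [dif_pos hne]
  have hch := hne.choose_spec
  rw [Finset.mem_sdiff] at hch
  intro heq
  apply hch.2
  rw [← heq]
  exact Finset.mem_image.mpr ⟨⟨m, by simp [hm, hmn]⟩, Finset.mem_attach _ _, rfl⟩

lemma bessel_dual {H : Type*} [NormedAddCommGroup H] [InnerProductSpace ℂ H]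
    (x : ℕ → H) {B : ℝ} (hB : 0 < B)
    (h : ∀ (s : Finset ℕ) (a : ℕ → ℂ),
      ‖∑ n ∈ s, a n • x n‖ ^ 2 ≤ B * ∑ n ∈ s, ‖a n‖ ^ 2)
    (y : H) (s : Finset ℕ) :
    ∑ m ∈ s, ‖(inner ℂ y (x m) : ℂ)‖ ^ 2 ≤ B * ‖y‖ ^ 2 := by
  set a : ℕ → ℂ := fun m => starRingEnd ℂ (inner ℂ y (x m)) with ha
  set T : ℝ := ∑ m ∈ s, ‖(inner ℂ y (x m) : ℂ)‖ ^ 2 with hT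
  have hT0 : 0 ≤ T := Finset.sum_nonneg fun _ _ => sq_nonneg _
  set v : H := ∑ m ∈ s, a m • x m with hv
  have hiv : (inner ℂ y v : ℂ) = (T : ℂ) := by
    rw [hv, inner_sum, hT]
    push_cast
    refine Finset.sum_congr rfl fun m _ => ?_
    rw [inner_smul_right]
    show (starRingEnd ℂ) (inner ℂ y (x m)) * (inner ℂ y (x m)) = _
    rw [RCLike.conj_mul]
    norm_cast
  have h1 : T ≤ ‖y‖ * ‖v‖ := by
    calc T = ‖(T : ℂ)‖ := by rw [Complex.norm_real, Real.norm_of_nonneg hT0]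
    _ = ‖(inner ℂ y v : ℂ)‖ := by rw [hiv]
    _ ≤ ‖y‖ * ‖v‖ := norm_inner_le_norm _ _
  have h2 : ‖v‖ ^ 2 ≤ B * T := by
    have hb := h s a
    rw [← hv] at hb
    refine hb.trans_eq ?_
    congr 1
    rw [hT]
    exact Finset.sum_congr rfl fun m _ => by
      show ‖(starRingEnd ℂ) (inner ℂ y (x m))‖ ^ 2 = _
      rw [RCLike.norm_conj]
  rcases eq_or_lt_of_le hT0 with h0 | h0
  · rw [← h0]; positivity
  · nlinarith [mul_le_mul h1 h1 hT0 (mul_nonneg (norm_nonneg y) (norm_nonneg v)),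
      norm_nonneg v, norm_nonneg y]

theorem bessel_partition_into_separated
    {H : Type*} [NormedAddCommGroup H] [InnerProductSpace ℂ H] [CompleteSpace H]
    (x : ℕ → H) (hunit : ∀ n, ‖x n‖ = 1)
    (hBessel : ∃ B > 0, ∀ (s : Finset ℕ) (a : ℕ → ℂ),
      ‖∑ n ∈ s, a n • x n‖ ^ 2 ≤ B * ∑ n ∈ s, ‖a n‖ ^ 2) :
    ∃ (N : ℕ) (f : ℕ → Fin N),
      (∀ c : Fin N, ∃ B > 0, ∀ (s : Finset ℕ) (a : ℕ → ℂ), (∀ n ∈ s, f n = c) →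
        ‖∑ n ∈ s, a n • x n‖ ^ 2 ≤ B * ∑ n ∈ s, ‖a n‖ ^ 2) ∧
      (∀ c : Fin N, ∃ γ < (1 : ℝ), ∀ n m, n ≠ m → f n = c → f m = c →
        ‖(inner ℂ (x n) (x m) : ℂ)‖ ≤ γ) := by
  classical
  obtain ⟨B, hB, hBes⟩ := hBessel
  set N : ℕ := ⌈4 * B⌉₊ with hNdef
  have hN : 0 < N := Nat.ceil_pos.mpr (by linarith)
  set A : ℕ → Finset ℕ := fun n =>
    (Finset.range n).filter (fun m => 1 / 2 < ‖(inner ℂ (x n) (x m) : ℂ)‖) with hA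
  -- degree bound
  have hdeg : ∀ n, ((A n).filter (· < n)).card < N := by
    intro n
    have hAlt : ∀ m ∈ A n, m < n := by
      intro m hm
      rw [hA] at hm
      exact Finset.mem_range.mp (Finset.mem_filter.mp hm).1
    have hfilt : (A n).filter (· < n) = A n := Finset.filter_true_of_mem hAlt
    rw [hfilt]
    have hnn : n ∉ A n := fun hc => lt_irrefl n (hAlt n hc)
    set t : Finset ℕ := insert n (A n) with ht
    have hsum : ∑ m ∈ t, ‖(inner ℂ (x n) (x m) : ℂ)‖ ^ 2 ≤ B := by
      have := bessel_dual x hB hBes (x n) t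
      rwa [hunit n, one_pow, mul_one] at this
    have hlow : (t.card : ℝ) * (1 / 4) ≤ ∑ m ∈ t, ‖(inner ℂ (x n) (x m) : ℂ)‖ ^ 2 := by
      have : ∀ m ∈ t, (1 / 4 : ℝ) ≤ ‖(inner ℂ (x n) (x m) : ℂ)‖ ^ 2 := by
        intro m hm
        rcases Finset.mem_insert.mp hm with heq | hm'
        · rw [heq, inner_self_eq_norm_sq_to_K, hunit]
          norm_num
        · have hm2 := hm'
          rw [hA] at hm2
          have h12 : (1 / 2 : ℝ) ≤ ‖(inner ℂ (x n) (x m) : ℂ)‖ :=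
            le_of_lt (Finset.mem_filter.mp hm2).2
          nlinarith [norm_nonneg (inner ℂ (x n) (x m) : ℂ)]
      simpa [nsmul_eq_mul] using Finset.card_nsmul_le_sum t _ (1 / 4 : ℝ) this
    have hcard4 : (t.card : ℝ) ≤ 4 * B := by linarith
    have htcard : t.card = (A n).card + 1 := by
      rw [ht, Finset.card_insert_of_notMem hnn]
    have : ((A n).card : ℝ) + 1 ≤ 4 * B := by
      rw [htcard] at hcard4; push_cast at hcard4; linarith
    have hceil : (4 * B : ℝ) ≤ (N : ℝ) := Nat.le_ceil _
    have : ((A n).card : ℝ) < (N : ℝ) := by linarith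
    exact_mod_cast this
  set f : ℕ → Fin N := greedyCol N hN A with hf
  refine ⟨N, f, ?_, ?_⟩
  · intro c
    exact ⟨B, hB, fun s a _ => hBes s a⟩
  · intro c
    refine ⟨1 / 2, by norm_num, ?_⟩
    intro n m hnm hfn hfm
    have key : ∀ p q : ℕ, q < p → f p = f q → ‖(inner ℂ (x p) (x q) : ℂ)‖ ≤ 1 / 2 := by
      intro p q hqp heq
      by_contra hc
      push_neg at hc
      have hmem : q ∈ A p := by
        rw [hA]; exact Finset.mem_filter.mpr ⟨Finset.mem_range.mpr hqp, hc⟩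
      exact greedyCol_spec N hN A p (hdeg p) q hmem hqp heq.symm
    rcases lt_or_gt_of_ne hnm with h | h
    · rw [norm_inner_symm]
      exact key m n h (hfm.trans hfn.symm)
    · exact key n m h (hfn.trans hfm.symm)
end

section
/- Let (xₙ) be a sequence of nonzero vectors in a Hilbert space H and A : H → H' an invertible bounded operator; set x'ₙ = A xₙ. Then the normalized sequence (xₙ/‖xₙ‖) is a Bessel sequence if and only if (x'ₙ/‖x'ₙ‖) is a Bessel sequence. -/
theorem bessel_aux
    {H H' : Type*} [NormedAddCommGroup H] [InnerProductSpace ℂ H] [CompleteSpace H]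
    [NormedAddCommGroup H'] [InnerProductSpace ℂ H'] [CompleteSpace H']
    (x : ℕ → H) (hx : ∀ n, x n ≠ 0) (A : H ≃L[ℂ] H')
    (h : ∃ B > 0, ∀ (s : Finset ℕ) (a : ℕ → ℂ),
        ‖∑ n ∈ s, a n • (‖x n‖⁻¹ • x n)‖ ^ 2 ≤ B * ∑ n ∈ s, ‖a n‖ ^ 2) :
    (∃ B > 0, ∀ (s : Finset ℕ) (a : ℕ → ℂ),
        ‖∑ n ∈ s, a n • (‖A (x n)‖⁻¹ • A (x n))‖ ^ 2 ≤ B * ∑ n ∈ s, ‖a n‖ ^ 2) := by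
  obtain ⟨B, hB, h⟩ := h
  set C := ‖(A : H →L[ℂ] H')‖ with hC
  set D := ‖(A.symm : H' →L[ℂ] H)‖ with hD
  have hC0 : 0 ≤ C := norm_nonneg _
  have hD0 : 0 ≤ D := norm_nonneg _
  refine ⟨B * (C + 1) ^ 2 * (D + 1) ^ 2, by positivity, ?_⟩
  intro s a
  set b : ℕ → ℂ := fun n => a n * ((‖x n‖ * ‖A (x n)‖⁻¹ : ℝ) : ℂ) with hb
  have hAx : ∀ n, A (x n) ≠ 0 := by
    intro n h0
    exact hx n (by simpa using congrArg A.symm h0)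
  have key : ∑ n ∈ s, a n • (‖A (x n)‖⁻¹ • A (x n))
      = A (∑ n ∈ s, b n • (‖x n‖⁻¹ • x n)) := by
    rw [map_sum]
    refine Finset.sum_congr rfl fun n _ => ?_
    have hxn : ‖x n‖ ≠ 0 := norm_ne_zero_iff.mpr (hx n)
    have hxnC : (‖x n‖ : ℂ) ≠ 0 := by exact_mod_cast hxn
    have hAxnC : (‖A (x n)‖ : ℂ) ≠ 0 := by
      exact_mod_cast norm_ne_zero_iff.mpr (hAx n)
    rw [← Complex.coe_smul, ← Complex.coe_smul, smul_smul, smul_smul, map_smul]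
    congr 1
    rw [hb]
    push_cast
    field_simp
  have hbn : ∀ n, ‖b n‖ ≤ ‖a n‖ * D := by
    intro n
    have hAxn : 0 < ‖A (x n)‖ := norm_pos_iff.mpr (hAx n)
    have hle : ‖x n‖ ≤ D * ‖A (x n)‖ := by
      have := (A.symm : H' →L[ℂ] H).le_opNorm (A (x n))
      simpa [hD] using this
    have hxd : ‖x n‖ * ‖A (x n)‖⁻¹ ≤ D := by
      rw [← div_eq_mul_inv, div_le_iff₀ hAxn]
      exact hle
    calc ‖b n‖ = ‖a n‖ * ‖((‖x n‖ * ‖A (x n)‖⁻¹ : ℝ) : ℂ)‖ := norm_mul _ _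
      _ ≤ ‖a n‖ * D := by
          refine mul_le_mul_of_nonneg_left ?_ (norm_nonneg _)
          rw [Complex.norm_real, Real.norm_of_nonneg (by positivity)]
          exact hxd
  have hsum : ∑ n ∈ s, ‖b n‖ ^ 2 ≤ (D + 1) ^ 2 * ∑ n ∈ s, ‖a n‖ ^ 2 := by
    rw [Finset.mul_sum]
    refine Finset.sum_le_sum fun n _ => ?_
    have h1 : ‖b n‖ ≤ ‖a n‖ * (D + 1) := (hbn n).trans (by nlinarith [norm_nonneg (a n)])
    nlinarith [norm_nonneg (b n), norm_nonneg (a n)]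
  have hAnorm : ‖A (∑ n ∈ s, b n • (‖x n‖⁻¹ • x n))‖
      ≤ C * ‖∑ n ∈ s, b n • (‖x n‖⁻¹ • x n)‖ :=
    (A : H →L[ℂ] H').le_opNorm _
  rw [key]
  have hS := h s b
  have hSnn : (0:ℝ) ≤ ‖∑ n ∈ s, b n • (‖x n‖⁻¹ • x n)‖ := norm_nonneg _
  have hAnn : (0:ℝ) ≤ ‖A (∑ n ∈ s, b n • (‖x n‖⁻¹ • x n))‖ := norm_nonneg _
  have hsq : ‖A (∑ n ∈ s, b n • (‖x n‖⁻¹ • x n))‖ ^ 2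
      ≤ C ^ 2 * ‖∑ n ∈ s, b n • (‖x n‖⁻¹ • x n)‖ ^ 2 := by nlinarith
  have hsnn : (0:ℝ) ≤ ∑ n ∈ s, ‖a n‖ ^ 2 :=
    Finset.sum_nonneg fun n _ => by positivity
  calc ‖A (∑ n ∈ s, b n • (‖x n‖⁻¹ • x n))‖ ^ 2
      ≤ C ^ 2 * ‖∑ n ∈ s, b n • (‖x n‖⁻¹ • x n)‖ ^ 2 := hsq
    _ ≤ C ^ 2 * (B * ∑ n ∈ s, ‖b n‖ ^ 2) := by gcongr
    _ ≤ C ^ 2 * (B * ((D + 1) ^ 2 * ∑ n ∈ s, ‖a n‖ ^ 2)) := by gcongr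
    _ ≤ B * (C + 1) ^ 2 * (D + 1) ^ 2 * ∑ n ∈ s, ‖a n‖ ^ 2 := by
        nlinarith [mul_nonneg (mul_nonneg hB.le (sq_nonneg (D + 1))) hsnn, hC0]

theorem bessel_invariant_under_invertible
    {H H' : Type*} [NormedAddCommGroup H] [InnerProductSpace ℂ H] [CompleteSpace H]
    [NormedAddCommGroup H'] [InnerProductSpace ℂ H'] [CompleteSpace H']
    (x : ℕ → H) (hx : ∀ n, x n ≠ 0) (A : H ≃L[ℂ] H') :
    (∃ B > 0, ∀ (s : Finset ℕ) (a : ℕ → ℂ),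
        ‖∑ n ∈ s, a n • (‖x n‖⁻¹ • x n)‖ ^ 2 ≤ B * ∑ n ∈ s, ‖a n‖ ^ 2) ↔
    (∃ B > 0, ∀ (s : Finset ℕ) (a : ℕ → ℂ),
        ‖∑ n ∈ s, a n • (‖A (x n)‖⁻¹ • A (x n))‖ ^ 2 ≤ B * ∑ n ∈ s, ‖a n‖ ^ 2) := by
  constructor
  · exact bessel_aux x hx A
  · intro h
    have hAx : ∀ n, A (x n) ≠ 0 := by
      intro n h0
      exact hx n (by simpa using congrArg A.symm h0)
    have := bessel_aux (fun n => A (x n)) hAx A.symm h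
    simpa using this
end

section
/- The sequence fₙ(z) = (1 + cos t)^{1/2} e^{int}, n ∈ ℤ, in L²(𝕋) is a separated Bessel sequence of unit vectors that is not a Riesz sequence. -/
open MeasureTheory Real

lemma expInt (k : ℤ) :
    ∫ t in Set.Ioc (0:ℝ) (2*π), Complex.exp (Complex.I * k * t)
      = if k = 0 then ((2*π : ℝ) : ℂ) else 0 := by
  rw [← intervalIntegral.integral_of_le (by positivity)]
  split_ifs with h
  · subst h
    simp [Real.pi_pos.le, intervalIntegral.integral_const]
  · have hc : Complex.I * k ≠ 0 := by
      simp [Complex.I_ne_zero, h]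
    have := integral_exp_mul_complex (a := 0) (b := 2*π) hc
    simp only [mul_assoc] at this ⊢
    rw [this]
    have h2 : Complex.exp (Complex.I * (↑k * ↑(2*π))) = 1 := by
      rw [show (Complex.I * (↑k * ↑(2*π))) = k * (2*π*Complex.I) by push_cast; ring]
      exact Complex.exp_int_mul_two_pi_mul_I k
    push_cast at h2 ⊢
    simp [h2]

noncomputable def cc (k : ℤ) : ℂ := if k = 0 then 1 else if k = 1 ∨ k = -1 then 1/2 else 0

lemma key (k : ℤ) :
    ∫ t in Set.Ioc (0:ℝ) (2*π), ((1 + Real.cos t : ℝ) : ℂ) * Complex.exp (Complex.I * k * t)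
      = (2*π) * cc k := by
  have hptw : ∀ t : ℝ, ((1 + Real.cos t : ℝ) : ℂ) * Complex.exp (Complex.I * k * t)
      = Complex.exp (Complex.I * k * t) + (1/2) * Complex.exp (Complex.I * ((k+1 : ℤ)) * t)
        + (1/2) * Complex.exp (Complex.I * ((k-1 : ℤ)) * t) := by
    intro t
    have h1 : Complex.I * (((k+1:ℤ)):ℂ) * t = Complex.I * k * t + t * Complex.I := by push_cast; ring
    have h2 : Complex.I * (((k-1:ℤ)):ℂ) * t = Complex.I * k * t + (-t) * Complex.I := by push_cast; ring
    have hcos : (Complex.cos (t:ℂ)) = (Complex.exp (t * Complex.I) + Complex.exp (-t * Complex.I)) / 2 := by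
      rw [← Complex.two_cos]; ring
    rw [h1, h2, Complex.exp_add, Complex.exp_add, Complex.ofReal_add,
      Complex.ofReal_one, Complex.ofReal_cos, hcos]
    ring
  have hint : ∀ j : ℤ, IntegrableOn (fun t : ℝ => Complex.exp (Complex.I * j * t))
      (Set.Ioc (0:ℝ) (2*π)) volume := by
    intro j
    apply Continuous.integrableOn_Ioc
    continuity
  simp only [hptw]
  have I1 : IntegrableOn (fun t : ℝ => Complex.exp (Complex.I * k * t)
      + (1/2) * Complex.exp (Complex.I * ((k+1:ℤ)) * t)) (Set.Ioc (0:ℝ) (2*π)) volume :=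
    (hint k).add ((hint (k+1)).const_mul _)
  rw [integral_add I1 ((hint (k-1)).const_mul _),
    integral_add (hint k) ((hint (k+1)).const_mul _), integral_const_mul, integral_const_mul]
  rw [expInt, expInt, expInt]
  unfold cc
  rcases eq_or_ne k 0 with h|h
  · subst h; norm_num
  rcases eq_or_ne k 1 with h1|h1
  · subst h1; norm_num; ring
  rcases eq_or_ne k (-1) with h2|h2
  · subst h2; norm_num; ring
  have e1 : ¬ (k+1 = 0) := by omega
  have e2 : ¬ (k-1 = 0) := by omega
  simp [h, h1, h2, e1, e2]

lemma inner_eq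
    (μ : Measure ℝ)
    (hμ : μ = ENNReal.ofReal (1 / (2 * Real.pi)) •
      (volume.restrict (Set.Ioc (0 : ℝ) (2 * Real.pi))))
    (f : ℤ → Lp ℂ 2 μ)
    (hf : ∀ n : ℤ, (f n : ℝ → ℂ) =ᵐ[μ]
      fun t => (Real.sqrt (1 + Real.cos t) : ℂ) * Complex.exp (Complex.I * n * t))
    (n m : ℤ) : (inner ℂ (f n) (f m) : ℂ) = cc (m - n) := by
  rw [MeasureTheory.L2.inner_def]
  have hae : (fun a => (inner ℂ (f n a) (f m a) : ℂ)) =ᵐ[μ]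
      fun t => ((1 + Real.cos t : ℝ):ℂ) * Complex.exp (Complex.I * ((m - n : ℤ)) * t) := by
    filter_upwards [hf n, hf m] with t h1 h2
    have hx : (0:ℝ) ≤ 1 + Real.cos t := by nlinarith [Real.neg_one_le_cos t]
    have hs : ((Real.sqrt (1+Real.cos t) : ℝ) : ℂ) * ((Real.sqrt (1+Real.cos t) : ℝ):ℂ)
        = ((1+Real.cos t : ℝ):ℂ) := by
      rw [← Complex.ofReal_mul, Real.mul_self_sqrt hx]
    have hce : (starRingEnd ℂ) (Complex.exp (Complex.I * n * t))
        = Complex.exp (-(Complex.I * n * t)) := by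
      rw [← Complex.exp_conj]
      congr 1
      simp [Complex.conj_I, Complex.conj_ofReal]
    have hexp : Complex.exp (-(Complex.I * n * t)) * Complex.exp (Complex.I * m * t)
        = Complex.exp (Complex.I * ((m - n : ℤ)) * t) := by
      rw [← Complex.exp_add]; congr 1; push_cast; ring
    simp only [RCLike.inner_apply, h1, h2, map_mul, Complex.conj_ofReal, hce]
    rw [← hexp, ← hs]; ring
  rw [integral_congr_ae hae, hμ, integral_smul_measure, key]
  have h2 : (ENNReal.ofReal (1 / (2 * π))).toReal = 1 / (2*π) :=
    ENNReal.toReal_ofReal (by positivity)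
  rw [h2]
  have hπ : (π:ℂ) ≠ 0 := by exact_mod_cast Real.pi_ne_zero
  rw [Complex.real_smul]
  push_cast
  field_simp

lemma cc_norm (k : ℤ) : ‖cc k‖ = if k = 0 then 1 else if k = 1 ∨ k = -1 then 1/2 else 0 := by
  unfold cc; split_ifs <;> norm_num

lemma cc_split (k : ℤ) : cc k = (if k = 0 then 1 else 0)
    + (1/2) * (if k = 1 then 1 else 0) + (1/2) * (if k = -1 then 1 else 0) := by
  unfold cc; split_ifs <;> norm_num <;> omega

lemma expand
    (μ : Measure ℝ)
    (hμ : μ = ENNReal.ofReal (1 / (2 * Real.pi)) •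
      (volume.restrict (Set.Ioc (0 : ℝ) (2 * Real.pi))))
    (f : ℤ → Lp ℂ 2 μ)
    (hf : ∀ n : ℤ, (f n : ℝ → ℂ) =ᵐ[μ]
      fun t => (Real.sqrt (1 + Real.cos t) : ℂ) * Complex.exp (Complex.I * n * t))
    (s : Finset ℤ) (a : ℤ → ℂ) :
    ‖∑ n ∈ s, a n • f n‖^2
      = (∑ n ∈ s, ∑ m ∈ s, (starRingEnd ℂ) (a n) * a m * cc (m - n)).re := by
  have hips : (inner ℂ (∑ n ∈ s, a n • f n) (∑ n ∈ s, a n • f n) : ℂ)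
      = ∑ n ∈ s, ∑ m ∈ s, (starRingEnd ℂ) (a n) * a m * cc (m - n) := by
    rw [sum_inner]
    refine Finset.sum_congr rfl fun n _ => ?_
    rw [inner_sum]
    refine Finset.sum_congr rfl fun m _ => ?_
    rw [inner_smul_left, inner_smul_right, inner_eq μ hμ f hf]
    ring
  rw [← inner_self_eq_norm_sq (𝕜 := ℂ), hips]
  rfl

noncomputable def dd (k : ℤ) : ℝ := if k = 0 then 1 else if k = 1 ∨ k = -1 then 1/2 else 0

lemma dd_nonneg (k : ℤ) : 0 ≤ dd k := by unfold dd; split_ifs <;> norm_num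

lemma dd_neg (k : ℤ) : dd (-k) = dd k := by unfold dd; split_ifs <;> first | rfl | omega

lemma dd_split (k : ℤ) : dd k = (if k = 0 then 1 else 0)
    + (1/2) * (if k = 1 then 1 else 0) + (1/2) * (if k = -1 then 1 else 0) := by
  unfold dd; split_ifs <;> norm_num <;> omega

lemma row_bound (s : Finset ℤ) (c : ℤ) : ∑ m ∈ s, dd (m - c) ≤ 2 := by
  have h : ∀ m ∈ s, dd (m - c) = (if m = c then (1:ℝ) else 0)
      + (1/2) * (if m = c + 1 then (1:ℝ) else 0) + (1/2) * (if m = c - 1 then (1:ℝ) else 0) := by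
    intro m _
    rw [dd_split]
    have e1 : (m - c = 0) ↔ (m = c) := by omega
    have e2 : (m - c = 1) ↔ (m = c + 1) := by omega
    have e3 : (m - c = -1) ↔ (m = c - 1) := by omega
    simp only [e1, e2, e3]
  rw [Finset.sum_congr rfl h, Finset.sum_add_distrib, Finset.sum_add_distrib,
    ← Finset.mul_sum, ← Finset.mul_sum, Finset.sum_ite_eq', Finset.sum_ite_eq',
    Finset.sum_ite_eq']
  split_ifs <;> norm_num

lemma bessel
    (μ : Measure ℝ)
    (hμ : μ = ENNReal.ofReal (1 / (2 * Real.pi)) •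
      (volume.restrict (Set.Ioc (0 : ℝ) (2 * Real.pi))))
    (f : ℤ → Lp ℂ 2 μ)
    (hf : ∀ n : ℤ, (f n : ℝ → ℂ) =ᵐ[μ]
      fun t => (Real.sqrt (1 + Real.cos t) : ℂ) * Complex.exp (Complex.I * n * t))
    (s : Finset ℤ) (a : ℤ → ℂ) :
    ‖∑ n ∈ s, a n • f n‖^2 ≤ 2 * ∑ n ∈ s, ‖a n‖^2 := by
  rw [expand μ hμ f hf, Complex.re_sum]
  simp only [Complex.re_sum]
  have S1 : ∑ n ∈ s, ∑ m ∈ s, dd (m-n) * ‖a n‖^2 ≤ 2 * ∑ n ∈ s, ‖a n‖^2 := by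
    rw [Finset.mul_sum]
    refine Finset.sum_le_sum fun n _ => ?_
    rw [← Finset.sum_mul]
    exact mul_le_mul_of_nonneg_right (row_bound s n) (sq_nonneg _)
  have S2 : ∑ n ∈ s, ∑ m ∈ s, dd (m-n) * ‖a m‖^2 ≤ 2 * ∑ n ∈ s, ‖a n‖^2 := by
    rw [Finset.sum_comm, Finset.mul_sum]
    refine Finset.sum_le_sum fun m _ => ?_
    rw [← Finset.sum_mul]
    refine mul_le_mul_of_nonneg_right ?_ (sq_nonneg _)
    calc ∑ n ∈ s, dd (m - n) = ∑ n ∈ s, dd (n - m) := by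
          refine Finset.sum_congr rfl fun n _ => ?_
          rw [← dd_neg (n-m)]; congr 1; ring
      _ ≤ 2 := row_bound s m
  have hterm : ∀ n ∈ s, ∀ m ∈ s, ((starRingEnd ℂ) (a n) * a m * cc (m-n)).re
      ≤ (1/2) * (dd (m-n) * ‖a n‖^2) + (1/2) * (dd (m-n) * ‖a m‖^2) := by
    intro n _ m _
    have h1 : ((starRingEnd ℂ) (a n) * a m * cc (m-n)).re
        ≤ ‖(starRingEnd ℂ) (a n) * a m * cc (m-n)‖ := by
      exact Complex.re_le_norm _
    have h2 : ‖(starRingEnd ℂ) (a n) * a m * cc (m-n)‖ = ‖a n‖ * ‖a m‖ * dd (m-n) := by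
      rw [norm_mul, norm_mul, RCLike.norm_conj, cc_norm]; rfl
    have h3 := dd_nonneg (m-n)
    nlinarith [sq_nonneg (‖a n‖ - ‖a m‖), norm_nonneg (a n), norm_nonneg (a m)]
  calc ∑ n ∈ s, ∑ m ∈ s, ((starRingEnd ℂ) (a n) * a m * cc (m-n)).re
      ≤ ∑ n ∈ s, ∑ m ∈ s, ((1/2) * (dd (m-n) * ‖a n‖^2) + (1/2) * (dd (m-n) * ‖a m‖^2)) :=
        Finset.sum_le_sum fun n hn => Finset.sum_le_sum fun m hm => hterm n hn m hm
    _ = (1/2) * (∑ n ∈ s, ∑ m ∈ s, dd (m-n) * ‖a n‖^2)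
        + (1/2) * (∑ n ∈ s, ∑ m ∈ s, dd (m-n) * ‖a m‖^2) := by
        simp only [Finset.sum_add_distrib, Finset.mul_sum]
    _ ≤ (1/2) * (2 * ∑ n ∈ s, ‖a n‖^2) + (1/2) * (2 * ∑ n ∈ s, ‖a n‖^2) := by
        have := add_le_add (mul_le_mul_of_nonneg_left S1 (by norm_num : (0:ℝ) ≤ 1/2))
          (mul_le_mul_of_nonneg_left S2 (by norm_num : (0:ℝ) ≤ 1/2))
        exact this
    _ = 2 * ∑ n ∈ s, ‖a n‖^2 := by ring

lemma term_eval (n m : ℤ) : (starRingEnd ℂ) ((-1:ℂ)^n) * (-1:ℂ)^m * cc (m-n)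
    = (if m = n then (1:ℂ) else 0) + (if m = n+1 then (-(1/2) : ℂ) else 0)
      + (if m = n-1 then (-(1/2):ℂ) else 0) := by
  have hne : (-1:ℂ) ≠ 0 := by norm_num
  have hc : (starRingEnd ℂ) ((-1:ℂ)^n) = (-1:ℂ)^n := by rw [map_zpow₀]; simp
  have hsq : ((-1:ℂ)^n) * ((-1:ℂ)^n) = 1 := by rw [← mul_zpow]; norm_num
  rw [hc]
  rcases eq_or_ne m n with rfl|h
  · have c1 : ¬ (m = m + 1) := by omega
    have c2 : ¬ (m = m - 1) := by omega
    rw [sub_self]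
    norm_num [cc, c1, c2]
    linear_combination hsq
  rcases eq_or_ne m (n+1) with rfl|h1
  · have e : ((-1:ℂ))^(n+1) = (-1:ℂ)^n * (-1) := by rw [zpow_add₀ hne]; norm_num
    have c1 : ¬ (n + 1 = n - 1) := by omega
    rw [show n+1-n = (1:ℤ) by ring, e]
    norm_num [cc, c1, h]
    linear_combination hsq
  rcases eq_or_ne m (n-1) with rfl|h2
  · have e : ((-1:ℂ))^(n-1) = (-1:ℂ)^n * (-1)⁻¹ := by
      rw [zpow_sub₀ hne, zpow_one, div_eq_mul_inv]
    have c1 : ¬ (n - 1 = n + 1) := by omega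
    rw [show n-1-n = (-1:ℤ) by ring, e]
    norm_num [cc, c1, h]
    linear_combination hsq
  · have c0 : ¬ (m - n = 0) := by omega
    have c1 : ¬ (m - n = 1) := by omega
    have c2 : ¬ (m - n = -1) := by omega
    simp [cc, c0, c1, c2, h, h1, h2]

lemma sum_eval (N : ℕ) :
    ∑ n ∈ Finset.Icc (0:ℤ) (N:ℤ), ∑ m ∈ Finset.Icc (0:ℤ) (N:ℤ),
      (starRingEnd ℂ) ((-1:ℂ)^n) * (-1:ℂ)^m * cc (m-n) = 1 := by
  set s := Finset.Icc (0:ℤ) (N:ℤ) with hs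
  have hinner : ∀ n ∈ s, ∑ m ∈ s, (starRingEnd ℂ) ((-1:ℂ)^n) * (-1:ℂ)^m * cc (m-n)
      = 1 + (if n+1 ∈ s then (-(1/2):ℂ) else 0) + (if n-1 ∈ s then (-(1/2):ℂ) else 0) := by
    intro n hn
    simp only [term_eval]
    rw [Finset.sum_add_distrib, Finset.sum_add_distrib, Finset.sum_ite_eq' s n (fun _ => (1:ℂ)),
      Finset.sum_ite_eq' s (n+1) (fun _ => (-(1/2):ℂ)),
      Finset.sum_ite_eq' s (n-1) (fun _ => (-(1/2):ℂ)), if_pos hn]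
  rw [Finset.sum_congr rfl hinner, Finset.sum_add_distrib, Finset.sum_add_distrib,
    Finset.sum_const, ← Finset.sum_filter, ← Finset.sum_filter, Finset.sum_const,
    Finset.sum_const]
  have hf1 : s.filter (fun n => n+1 ∈ s) = Finset.Icc (0:ℤ) ((N:ℤ)-1) := by
    ext x; simp only [hs, Finset.mem_Icc, Finset.mem_filter]; omega
  have hf2 : s.filter (fun n => n-1 ∈ s) = Finset.Icc (1:ℤ) (N:ℤ) := by
    ext x; simp only [hs, Finset.mem_Icc, Finset.mem_filter]; omega
  rw [hf1, hf2, hs]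
  rw [Int.card_Icc, Int.card_Icc, Int.card_Icc]
  have c1 : ((N:ℤ)+1-0).toNat = N+1 := by omega
  have c2 : ((N:ℤ)-1+1-0).toNat = N := by omega
  have c3 : ((N:ℤ)+1-1).toNat = N := by omega
  rw [c1, c2, c3]
  simp only [nsmul_eq_mul]
  push_cast
  ring

theorem separated_bessel_not_riesz_example
    (μ : Measure ℝ)
    (hμ : μ = ENNReal.ofReal (1 / (2 * Real.pi)) •
      (volume.restrict (Set.Ioc (0 : ℝ) (2 * Real.pi))))
    (f : ℤ → Lp ℂ 2 μ)
    (hf : ∀ n : ℤ, (f n : ℝ → ℂ) =ᵐ[μ]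
      fun t => (Real.sqrt (1 + Real.cos t) : ℂ) * Complex.exp (Complex.I * n * t)) :
    (∀ n, ‖f n‖ = 1) ∧
    (∃ B > 0, ∀ (s : Finset ℤ) (a : ℤ → ℂ),
        ‖∑ n ∈ s, a n • f n‖ ^ 2 ≤ B * ∑ n ∈ s, ‖a n‖ ^ 2) ∧
    (∃ γ < (1 : ℝ), ∀ n m : ℤ, n ≠ m → ‖(inner ℂ (f n) (f m) : ℂ)‖ ≤ γ) ∧
    ¬ (∃ A > 0, ∀ (s : Finset ℤ) (a : ℤ → ℂ),
        A * ∑ n ∈ s, ‖a n‖ ^ 2 ≤ ‖∑ n ∈ s, a n • f n‖ ^ 2) := by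
  have hnorm1 : ∀ n, ‖f n‖ = 1 := by
    intro n
    have h0 : (inner ℂ (f n) (f n) : ℂ) = 1 := by rw [inner_eq μ hμ f hf, sub_self]; simp [cc]
    have h1 := inner_self_eq_norm_sq (𝕜 := ℂ) (f n)
    rw [h0] at h1
    have h2 : ‖f n‖^2 = 1 := by simpa using h1.symm
    nlinarith [norm_nonneg (f n)]
  refine ⟨hnorm1, ⟨2, by norm_num, fun s a => bessel μ hμ f hf s a⟩,
    ⟨1/2, by norm_num, ?_⟩, ?_⟩
  · intro n m hnm
    rw [inner_eq μ hμ f hf, cc_norm]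
    have h0 : ¬ (m - n = 0) := by omega
    rw [if_neg h0]
    split_ifs <;> norm_num
  · rintro ⟨A, hApos, hA⟩
    obtain ⟨N, hN⟩ := exists_nat_gt (1/A)
    set s := Finset.Icc (0:ℤ) (N:ℤ) with hs
    set a : ℤ → ℂ := fun n => (-1:ℂ)^n with ha
    have hsum : ∑ n ∈ s, ‖a n‖^2 = (N+1 : ℝ) := by
      have he : ∀ n ∈ s, ‖a n‖^2 = 1 := by
        intro n _
        simp [ha, norm_zpow]
      rw [Finset.sum_congr rfl he, Finset.sum_const, hs, Int.card_Icc]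
      have : ((N:ℤ)+1-0).toNat = N+1 := by omega
      rw [this]; simp
    have hnormS : ‖∑ n ∈ s, a n • f n‖^2 = 1 := by
      rw [expand μ hμ f hf]
      simp only [ha, hs]
      rw [sum_eval N]
      simp
    have hle := hA s a
    rw [hsum, hnormS] at hle
    rw [div_lt_iff₀ hApos] at hN
    nlinarith
end

section
/- For reproducing kernel Hilbert spaces H and H' on Ω with the same underlying functions and equivalent norms, a sequence (λₙ) in Ω is separated with respect to the normalized kernels of H if and only if it is separated with respect to the normalized kernels of H'. -/
open scoped ComplexConjugate

local notation "⟪" x ", " y "⟫" => @inner ℂ _ _ x y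

/-- Key geometric lemma: the "angle quantity" `1 - |⟨û,v̂⟩|²` is distorted by at most
`(C‖T‖)²` under a bounded, bounded-below map `T`. -/
lemma key_angle {H H' : Type*} [NormedAddCommGroup H] [InnerProductSpace ℂ H]
    [NormedAddCommGroup H'] [InnerProductSpace ℂ H']
    (T : H' →L[ℂ] H) (C : ℝ) (hlow : ∀ w : H', ‖w‖ ≤ C * ‖T w‖)
    (u v : H') (hu : u ≠ 0) (hv : v ≠ 0) (hTu : T u ≠ 0) (hTv : T v ≠ 0) :
    1 - ‖(inner ℂ (‖T u‖⁻¹ • T u) (‖T v‖⁻¹ • T v) : ℂ)‖ ^ 2 ≤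
      (C * ‖T‖) ^ 2 * (1 - ‖(inner ℂ (‖u‖⁻¹ • u) (‖v‖⁻¹ • v) : ℂ)‖ ^ 2) := by
  have hunorm : ‖u‖ ≠ 0 := norm_ne_zero_iff.mpr hu
  have hvnorm : ‖v‖ ≠ 0 := norm_ne_zero_iff.mpr hv
  have hTunorm : ‖T u‖ ≠ 0 := norm_ne_zero_iff.mpr hTu
  have hTvnorm : ‖T v‖ ≠ 0 := norm_ne_zero_iff.mpr hTv
  have hCpos : 0 < C := by
    have h1 := hlow u
    have h2 : 0 < ‖u‖ := lt_of_le_of_ne (norm_nonneg u) (Ne.symm hunorm)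
    have h3 : 0 < ‖T u‖ := lt_of_le_of_ne (norm_nonneg (T u)) (Ne.symm hTunorm)
    nlinarith
  -- convert real smuls to complex smuls
  simp only [RCLike.real_smul_eq_coe_smul (K := ℂ)]
  set x : H' := ((‖u‖⁻¹ : ℝ) : ℂ) • u with hx
  set z : H' := ((‖v‖⁻¹ : ℝ) : ℂ) • v with hz
  set p : H := ((‖T u‖⁻¹ : ℝ) : ℂ) • T u with hp
  set q : H := ((‖T v‖⁻¹ : ℝ) : ℂ) • T v with hq
  have hxn : ‖x‖ = 1 := by
    rw [hx, norm_smul, Complex.norm_real, Real.norm_eq_abs,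
      abs_of_nonneg (inv_nonneg.mpr (norm_nonneg u)), inv_mul_cancel₀ hunorm]
  have hzn : ‖z‖ = 1 := by
    rw [hz, norm_smul, Complex.norm_real, Real.norm_eq_abs,
      abs_of_nonneg (inv_nonneg.mpr (norm_nonneg v)), inv_mul_cancel₀ hvnorm]
  have hpn : ‖p‖ = 1 := by
    rw [hp, norm_smul, Complex.norm_real, Real.norm_eq_abs,
      abs_of_nonneg (inv_nonneg.mpr (norm_nonneg (T u))), inv_mul_cancel₀ hTunorm]
  have hqn : ‖q‖ = 1 := by
    rw [hq, norm_smul, Complex.norm_real, Real.norm_eq_abs,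
      abs_of_nonneg (inv_nonneg.mpr (norm_nonneg (T v))), inv_mul_cancel₀ hTvnorm]
  set t : ℂ := ⟪x, z⟫ with ht
  set s : ℂ := ⟪p, q⟫ with hs
  -- step 1 : distance from x to the line through z
  have step1 : ‖x - (conj t) • z‖ ^ 2 = 1 - ‖t‖ ^ 2 := by
    rw [@norm_sub_sq ℂ, inner_smul_right, hxn, norm_smul, hzn, ← ht]
    have h1 : RCLike.re ((conj t) * t) = ‖t‖ ^ 2 := by
      rw [RCLike.re_to_complex, mul_comm, Complex.mul_conj]
      simp [Complex.sq_norm]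
    have h2 : ‖conj t‖ = ‖t‖ := RCLike.norm_conj t
    rw [h1, h2]
    ring
  -- step 2 : any point on the line through q is at distance ≥ √(1-‖s‖²) from p
  have step2 : ∀ c : ℂ, 1 - ‖s‖ ^ 2 ≤ ‖p - c • q‖ ^ 2 := by
    intro c
    rw [@norm_sub_sq ℂ, inner_smul_right, hpn, norm_smul, hqn, ← hs]
    have h1 : RCLike.re (c * s) = c.re * s.re - c.im * s.im := by
      rw [RCLike.re_to_complex]; exact Complex.mul_re c s
    have h2 : ‖s‖ ^ 2 = s.re ^ 2 + s.im ^ 2 := by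
      rw [Complex.sq_norm, Complex.normSq_apply]; ring
    have h3 : ‖c‖ ^ 2 = c.re ^ 2 + c.im ^ 2 := by
      rw [Complex.sq_norm, Complex.normSq_apply]; ring
    rw [h1, h2, mul_one, h3]
    nlinarith [sq_nonneg (s.re - c.re), sq_nonneg (s.im + c.im)]
  -- step 3 : transport the distance through T
  set c : ℂ := ((‖u‖ * ‖T v‖ / (‖v‖ * ‖T u‖) : ℝ) : ℂ) * conj t with hc
  have hid : p - c • q = ((‖u‖ / ‖T u‖ : ℝ) : ℂ) • T (x - conj t • z) := by
    have hcu : ((‖u‖ : ℝ) : ℂ) ≠ 0 := by exact_mod_cast hunorm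
    have hcv : ((‖v‖ : ℝ) : ℂ) ≠ 0 := by exact_mod_cast hvnorm
    have hcTu : ((‖T u‖ : ℝ) : ℂ) ≠ 0 := by exact_mod_cast hTunorm
    have hcTv : ((‖T v‖ : ℝ) : ℂ) ≠ 0 := by exact_mod_cast hTvnorm
    rw [hx, hz, hp, hq, hc]
    simp only [map_sub, map_smul]
    match_scalars <;> push_cast <;> field_simp <;> ring
  have hnormineq : ‖p - c • q‖ ≤ (C * ‖T‖) * ‖x - conj t • z‖ := by
    rw [hid, norm_smul, Complex.norm_real, Real.norm_eq_abs,
      abs_of_nonneg (by positivity : (0:ℝ) ≤ ‖u‖ / ‖T u‖)]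
    have h1 : ‖T (x - conj t • z)‖ ≤ ‖T‖ * ‖x - conj t • z‖ := T.le_opNorm _
    have h2 : ‖u‖ / ‖T u‖ ≤ C := by
      rw [div_le_iff₀ (lt_of_le_of_ne (norm_nonneg (T u)) (Ne.symm hTunorm))]
      exact hlow u
    have h3 : 0 ≤ ‖T (x - conj t • z)‖ := norm_nonneg _
    nlinarith [norm_nonneg (x - conj t • z), norm_nonneg T, mul_le_mul_of_nonneg_right h2 h3]
  -- combine
  have hfin : 1 - ‖s‖ ^ 2 ≤ (C * ‖T‖) ^ 2 * (1 - ‖t‖ ^ 2) := by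
    have h1 := step2 c
    have h2 : ‖p - c • q‖ ^ 2 ≤ ((C * ‖T‖) * ‖x - conj t • z‖) ^ 2 := by
      have := hnormineq
      nlinarith [norm_nonneg (p - c • q)]
    calc 1 - ‖s‖ ^ 2 ≤ ‖p - c • q‖ ^ 2 := h1
      _ ≤ ((C * ‖T‖) * ‖x - conj t • z‖) ^ 2 := h2
      _ = (C * ‖T‖) ^ 2 * (‖x - conj t • z‖ ^ 2) := by ring
      _ = (C * ‖T‖) ^ 2 * (1 - ‖t‖ ^ 2) := by rw [step1]
  exact hfin

/-- One direction: if the images under `T` are separated, so are the sources. -/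
lemma dir_lemma {H H' : Type*} [NormedAddCommGroup H] [InnerProductSpace ℂ H]
    [NormedAddCommGroup H'] [InnerProductSpace ℂ H']
    (T : H' →L[ℂ] H) (C : ℝ) (hlow : ∀ w : H', ‖w‖ ≤ C * ‖T w‖)
    (u : ℕ → H') (hu : ∀ n, u n ≠ 0) (hTu : ∀ n, T (u n) ≠ 0)
    (h : ∃ γ < (1:ℝ), ∀ n m : ℕ, n ≠ m →
      ‖(inner ℂ (‖T (u n)‖⁻¹ • T (u n)) (‖T (u m)‖⁻¹ • T (u m)) : ℂ)‖ ≤ γ) :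
    ∃ γ < (1:ℝ), ∀ n m : ℕ, n ≠ m →
      ‖(inner ℂ (‖u n‖⁻¹ • u n) (‖u m‖⁻¹ • u m) : ℂ)‖ ≤ γ := by
  obtain ⟨γ, hγ1, hsep⟩ := h
  set γ₀ : ℝ := max γ 0 with hγ₀
  have hγ₀0 : 0 ≤ γ₀ := le_max_right _ _
  have hγ₀1 : γ₀ < 1 := max_lt hγ1 one_pos
  have hsep₀ : ∀ n m : ℕ, n ≠ m →
      ‖(inner ℂ (‖T (u n)‖⁻¹ • T (u n)) (‖T (u m)‖⁻¹ • T (u m)) : ℂ)‖ ≤ γ₀ :=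
    fun n m hnm => le_trans (hsep n m hnm) (le_max_left _ _)
  set K : ℝ := C * ‖T‖ with hK
  have hu0 : 0 < ‖u 0‖ := norm_pos_iff.mpr (hu 0)
  have hK1 : 1 ≤ K := by
    have h1 := hlow (u 0)
    have h2 : ‖T (u 0)‖ ≤ ‖T‖ * ‖u 0‖ := T.le_opNorm _
    have hCpos : 0 < C := by
      have h3 : 0 < ‖T (u 0)‖ := norm_pos_iff.mpr (hTu 0)
      nlinarith
    nlinarith
  have hKpos : 0 < K := lt_of_lt_of_le one_pos hK1
  set γ' : ℝ := Real.sqrt (1 - (1 - γ₀ ^ 2) / K ^ 2) with hγ'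
  have harg0 : 0 ≤ 1 - (1 - γ₀ ^ 2) / K ^ 2 := by
    have h1 : (1 - γ₀ ^ 2) / K ^ 2 ≤ 1 := by
      rw [div_le_one (by positivity)]
      nlinarith
    linarith
  have harg1 : 1 - (1 - γ₀ ^ 2) / K ^ 2 < 1 := by
    have h1 : 0 < (1 - γ₀ ^ 2) / K ^ 2 := by
      apply div_pos (by nlinarith) (by positivity)
    linarith
  have hγ'sq : γ' ^ 2 = 1 - (1 - γ₀ ^ 2) / K ^ 2 := Real.sq_sqrt harg0
  have hγ'0 : 0 ≤ γ' := Real.sqrt_nonneg _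
  have hγ'1 : γ' < 1 := by nlinarith
  refine ⟨γ', hγ'1, fun n m hnm => ?_⟩
  have hkey := key_angle T C hlow (u n) (u m) (hu n) (hu m) (hTu n) (hTu m)
  have hT := hsep₀ n m hnm
  set a : ℝ := ‖(inner ℂ (‖T (u n)‖⁻¹ • T (u n)) (‖T (u m)‖⁻¹ • T (u m)) : ℂ)‖ with ha
  set b : ℝ := ‖(inner ℂ (‖u n‖⁻¹ • u n) (‖u m‖⁻¹ • u m) : ℂ)‖ with hb
  have ha0 : 0 ≤ a := norm_nonneg _
  have hb0 : 0 ≤ b := norm_nonneg _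
  -- hkey : 1 - a^2 ≤ K^2 * (1 - b^2), hT : a ≤ γ₀ ⇒ b ≤ γ'
  rw [← hK] at hkey
  have hbsq : b ^ 2 ≤ γ' ^ 2 := by
    rw [hγ'sq]
    have h1 : 1 - γ₀ ^ 2 ≤ 1 - a ^ 2 := by nlinarith
    have h2 : 1 - γ₀ ^ 2 ≤ K ^ 2 * (1 - b ^ 2) := by linarith
    have h3 : (1 - γ₀ ^ 2) / K ^ 2 ≤ 1 - b ^ 2 := by
      rw [div_le_iff₀ (by positivity)]
      nlinarith
    linarith
  nlinarith

set_option maxHeartbeats 1000000 in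
theorem separated_invariant_under_renorming
    {Ω : Type*} {H H' : Type*}
    [NormedAddCommGroup H] [InnerProductSpace ℂ H] [CompleteSpace H]
    [NormedAddCommGroup H'] [InnerProductSpace ℂ H'] [CompleteSpace H']
    (A : H ≃L[ℂ] H')
    (toFun : H →ₗ[ℂ] (Ω → ℂ)) (toFun' : H' →ₗ[ℂ] (Ω → ℂ))
    (hA : ∀ f : H, toFun' (A f) = toFun f)
    (k : Ω → H) (k' : Ω → H')
    (hk : ∀ (f : H) (lam : Ω), toFun f lam = (inner ℂ (k lam) f : ℂ))
    (hk' : ∀ (g : H') (lam : Ω), toFun' g lam = (inner ℂ (k' lam) g : ℂ))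
    (Λ : ℕ → Ω) (hΛ : ∀ n, k (Λ n) ≠ 0) (hΛ' : ∀ n, k' (Λ n) ≠ 0) :
    (∃ γ < (1 : ℝ), ∀ n m : ℕ, n ≠ m →
        ‖(inner ℂ (‖k (Λ n)‖⁻¹ • k (Λ n)) (‖k (Λ m)‖⁻¹ • k (Λ m)) : ℂ)‖ ≤ γ) ↔
    (∃ γ < (1 : ℝ), ∀ n m : ℕ, n ≠ m →
        ‖(inner ℂ (‖k' (Λ n)‖⁻¹ • k' (Λ n)) (‖k' (Λ m)‖⁻¹ • k' (Λ m)) : ℂ)‖ ≤ γ) := by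
  set B : H →L[ℂ] H' := (A : H →L[ℂ] H') with hB
  set B' : H' →L[ℂ] H := (A.symm : H' →L[ℂ] H) with hB'
  set T : H' →L[ℂ] H := ContinuousLinearMap.adjoint B with hT
  set S : H →L[ℂ] H' := ContinuousLinearMap.adjoint B' with hS
  have hTk : ∀ lam : Ω, T (k' lam) = k lam := by
    intro lam
    apply ext_inner_right ℂ
    intro f
    rw [hT, ContinuousLinearMap.adjoint_inner_left]
    have h1 : (inner ℂ (k' lam) (B f) : ℂ) = toFun' (A f) lam := (hk' (A f) lam).symm
    rw [h1, hA, hk]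
  have hSk : ∀ lam : Ω, S (k lam) = k' lam := by
    intro lam
    apply ext_inner_right ℂ
    intro g
    rw [hS, ContinuousLinearMap.adjoint_inner_left]
    have h1 : (inner ℂ (k lam) (B' g) : ℂ) = toFun (A.symm g) lam := (hk (A.symm g) lam).symm
    rw [h1, ← hA (A.symm g), A.apply_symm_apply, hk']
  have hlowT : ∀ w : H', ‖w‖ ≤ ‖B'‖ * ‖T w‖ := by
    intro w
    rcases eq_or_ne w 0 with rfl | hw
    · simp
    · have hwpos : 0 < ‖w‖ := norm_pos_iff.mpr hw
      have h1 : (inner ℂ w w : ℂ) = inner ℂ (T w) (B' w) := by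
        have h2 : (inner ℂ w w : ℂ) = inner ℂ w (B (B' w)) := by
          have h0 : B (B' w) = w := by simp [hB, hB']
          rw [h0]
        rw [h2, hT, ContinuousLinearMap.adjoint_inner_left]
      have h3 : ‖w‖ * ‖w‖ = RCLike.re (inner ℂ w w : ℂ) :=
        (inner_self_eq_norm_mul_norm w).symm
      have h4 : RCLike.re (inner ℂ w w : ℂ) ≤ ‖(inner ℂ (T w) (B' w) : ℂ)‖ := by
        rw [h1]; exact RCLike.re_le_norm _
      have h5 : ‖(inner ℂ (T w) (B' w) : ℂ)‖ ≤ ‖T w‖ * ‖B' w‖ := norm_inner_le_norm _ _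
      have h6 : ‖B' w‖ ≤ ‖B'‖ * ‖w‖ := B'.le_opNorm w
      have h7 : ‖w‖ * ‖w‖ ≤ ‖T w‖ * (‖B'‖ * ‖w‖) := by
        nlinarith [norm_nonneg (T w)]
      nlinarith
  have hlowS : ∀ f : H, ‖f‖ ≤ ‖B‖ * ‖S f‖ := by
    intro f
    rcases eq_or_ne f 0 with rfl | hf
    · simp
    · have hfpos : 0 < ‖f‖ := norm_pos_iff.mpr hf
      have h1 : (inner ℂ f f : ℂ) = inner ℂ (S f) (B f) := by
        have h2 : (inner ℂ f f : ℂ) = inner ℂ f (B' (B f)) := by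
          have h0 : B' (B f) = f := by simp [hB, hB']
          rw [h0]
        rw [h2, hS, ContinuousLinearMap.adjoint_inner_left]
      have h3 : ‖f‖ * ‖f‖ = RCLike.re (inner ℂ f f : ℂ) :=
        (inner_self_eq_norm_mul_norm f).symm
      have h4 : RCLike.re (inner ℂ f f : ℂ) ≤ ‖(inner ℂ (S f) (B f) : ℂ)‖ := by
        rw [h1]; exact RCLike.re_le_norm _
      have h5 : ‖(inner ℂ (S f) (B f) : ℂ)‖ ≤ ‖S f‖ * ‖B f‖ := norm_inner_le_norm _ _
      have h6 : ‖B f‖ ≤ ‖B‖ * ‖f‖ := B.le_opNorm f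
      have h7 : ‖f‖ * ‖f‖ ≤ ‖S f‖ * (‖B‖ * ‖f‖) := by
        nlinarith [norm_nonneg (S f)]
      nlinarith
  constructor
  · intro h
    have hTu : ∀ n, T (k' (Λ n)) ≠ 0 := by
      intro n; rw [hTk]; exact hΛ n
    have h' : ∃ γ < (1:ℝ), ∀ n m : ℕ, n ≠ m →
        ‖(inner ℂ (‖T (k' (Λ n))‖⁻¹ • T (k' (Λ n))) (‖T (k' (Λ m))‖⁻¹ • T (k' (Λ m))) : ℂ)‖ ≤ γ := by
      simpa only [hTk] using h
    exact dir_lemma T ‖B'‖ hlowT (fun n => k' (Λ n)) hΛ' hTu h'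
  · intro h
    have hSu : ∀ n, S (k (Λ n)) ≠ 0 := by
      intro n; rw [hSk]; exact hΛ' n
    have h' : ∃ γ < (1:ℝ), ∀ n m : ℕ, n ≠ m →
        ‖(inner ℂ (‖S (k (Λ n))‖⁻¹ • S (k (Λ n))) (‖S (k (Λ m))‖⁻¹ • S (k (Λ m))) : ℂ)‖ ≤ γ := by
      simpa only [hSk] using h
    exact dir_lemma S ‖B‖ hlowS (fun n => k (Λ n)) hΛ hSu h'
end
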